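/- Let W: 𝒵_Δ → G be a successor weighting of a Brauer graph (Δ, 𝔬, m) with values in a finite abelian group G. Then for each vertex μ ∈ Δ₀ and each equivalence class d ∈ 𝒟_μ, the valency of the vertex μ_d in the covering graph Δ_W equals ord(μ)·val(μ). -/

import Mathlib

/-- A Brauer graph `(Γ, 𝔬, m)`, presented via half-edges: `H` is the (finite, nonempty)
set of half-edges, `σ` is the successor permutation whose cycle at a vertex lists the
incident half-edges in the cyclic order `𝔬` (a loop contributes two half-edges, i.e. is
"listed twice"), `ι` is the fixed-point-free involution pairing the two half-edges of
each edge, `v` assigns to each half-edge its vertex (so the fibres of `v` are exactly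
the cycles of `σ`), the graph is connected, and `m` is the multiplicity function. -/
structure BrauerGraph where
  H : Type
  V : Type
  fintypeH : Fintype H
  decEqH : DecidableEq H
  fintypeV : Fintype V
  decEqV : DecidableEq V
  nonemptyH : Nonempty H
  σ : Equiv.Perm H
  ι : Equiv.Perm H
  ι_invol : ∀ h, ι (ι h) = h
  ι_ne : ∀ h, ι h ≠ h
  v : H → V
  v_surj : Function.Surjective v
  v_eq_iff : ∀ h h', v h = v h' ↔ ∃ n : ℤ, (σ ^ n) h = h'
  connected : ∀ h h' : H, ∃ g ∈ Subgroup.closure ({σ, ι} : Set (Equiv.Perm H)), g h = h'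
  m : V → ℕ
  m_pos : ∀ μ, 0 < m μ

attribute [instance] BrauerGraph.fintypeH BrauerGraph.decEqH
attribute [instance] BrauerGraph.fintypeV BrauerGraph.decEqV

namespace BrauerGraph

variable (Γ : BrauerGraph)

/-- The valency of a vertex: the number of incident half-edges (loops counted twice). -/
noncomputable def val (μ : Γ.V) : ℕ := Nat.card {h : Γ.H // Γ.v h = μ}

end BrauerGraph

/-- A Brauer action of a group `G` on a Brauer graph: a faithful action on half-edges
commuting with the successor permutation (i.e. orientation/successor preserving) and
with the edge involution (i.e. an action by graph automorphisms), and preserving the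
multiplicity function. -/
structure BrauerAction (G : Type) [Group G] (Γ : BrauerGraph) where
  e : G →* Equiv.Perm Γ.H
  faithful : Function.Injective e
  comm_σ : ∀ g h, e g (Γ.σ h) = Γ.σ (e g h)
  comm_ι : ∀ g h, e g (Γ.ι h) = Γ.ι (e g h)
  m_inv : ∀ g h, Γ.m (Γ.v (e g h)) = Γ.m (Γ.v h)

namespace BrauerAction

variable {G : Type} [Group G] {Γ : BrauerGraph}

/-- A free Brauer action: the action is free on the set of edges (loops counted twice,
i.e. on half-edges). -/
def IsFree (A : BrauerAction G Γ) : Prop := ∀ (g : G) (h : Γ.H), A.e g h = h → g = 1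

/-- The orbit equivalence relation of the action on half-edges. -/
def orbSetoid (A : BrauerAction G Γ) : Setoid Γ.H where
  r h h' := ∃ g : G, A.e g h = h'
  iseqv := by
    refine ⟨fun h => ⟨1, by simp⟩, ?_, ?_⟩
    · rintro h h' ⟨g, hg⟩
      exact ⟨g⁻¹, by rw [← hg, ← Equiv.Perm.mul_apply, ← map_mul]; simp⟩
    · rintro a b c ⟨g₁, hg₁⟩ ⟨g₂, hg₂⟩
      exact ⟨g₂ * g₁, by rw [map_mul, Equiv.Perm.mul_apply, hg₁, hg₂]⟩

/-- The orbit equivalence relation of the action restricted to a subset of half-edges. -/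
def subOrbSetoid (A : BrauerAction G Γ) (P : Γ.H → Prop) : Setoid {h : Γ.H // P h} where
  r p q := ∃ g : G, A.e g p.1 = q.1
  iseqv := by
    refine ⟨fun p => ⟨1, by simp⟩, ?_, ?_⟩
    · rintro p q ⟨g, hg⟩
      exact ⟨g⁻¹, by rw [← hg, ← Equiv.Perm.mul_apply, ← map_mul]; simp⟩
    · rintro a b c ⟨g₁, hg₁⟩ ⟨g₂, hg₂⟩
      exact ⟨g₂ * g₁, by rw [map_mul, Equiv.Perm.mul_apply, hg₁, hg₂]⟩

/-- The induced action of `g ∈ G` on vertices (defined via a chosen half-edge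
in the fibre of the vertex). -/
noncomputable def vmap (A : BrauerAction G Γ) (g : G) (μ : Γ.V) : Γ.V :=
  Γ.v (A.e g (Γ.v_surj μ).choose)

/-- The valency, in the orbit graph `Γ/G`, of the orbit vertex `μ̄` of `μ`: the number
of `G`-orbits of half-edges incident with a vertex in the orbit of `μ`. -/
noncomputable def orbVal (A : BrauerAction G Γ) (μ : Γ.V) : ℕ :=
  Nat.card (Quotient (A.subOrbSetoid (fun h => ∃ a : G, Γ.v (A.e a h) = μ)))

/-- The multiplicity function `m̄(μ̄) = val(μ)·m(μ)/val(μ̄)` of the orbit graph,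
expressed on representatives. -/
noncomputable def mbar (A : BrauerAction G Γ) (μ : Γ.V) : ℕ :=
  Γ.val μ * Γ.m μ / A.orbVal μ

end BrauerAction

namespace BrauerGraph

variable (Γ : BrauerGraph) {G : Type} [CommGroup G]

/-- `ω_μ`: the product of the values of a successor weighting `W` over all successor
pairs at the vertex `μ` (a successor pair `(i, σ i)` is identified with the half-edge
`i`). -/
noncomputable def omega (W : Γ.H → G) (μ : Γ.V) : G :=
  ∏ h ∈ Finset.univ.filter (fun h => Γ.v h = μ), W h

/-- `ω(i₁, i_{r+1})`: the product of the weights along the first `r` steps of the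
successor sequence of the half-edge `h`. -/
noncomputable def wpath (W : Γ.H → G) (h : Γ.H) (r : ℕ) : G :=
  ∏ t ∈ Finset.range r, W ((Γ.σ ^ t) h)

/-- The generating relation for the equivalence classes `[i, H_{μ,s}]` defining the
vertices of the Brauer covering graph `Δ_W`: a pair `(i, g)` (representing the pair of
`i` and the coset `H_{v i}·g`) is related to `(σ i, g·W(i))`, and to `(i, g·ω_{v i})`
(the latter identifies representatives of the same coset of `H_μ = ⟨ω_μ⟩`). -/
def covRel (W : Γ.H → G) : Γ.H × G → Γ.H × G → Prop := fun p q =>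
  (q.1 = Γ.σ p.1 ∧ q.2 = p.2 * W p.1) ∨ (q.1 = p.1 ∧ q.2 = p.2 * Γ.omega W (Γ.v p.1))

end BrauerGraph

section BrauerCoveringAux

open Function

variable {G : Type} [CommGroup G] (Γ : BrauerGraph) (W : Γ.H → G)

private lemma bg_wpath_succ (h : Γ.H) (t : ℕ) :
    Γ.wpath W h (t + 1) = Γ.wpath W h t * W ((Γ.σ ^ t) h) :=
  Finset.prod_range_succ _ _

private lemma bg_wpath_add (h : Γ.H) (a b : ℕ) :
    Γ.wpath W h (a + b) = Γ.wpath W h a * Γ.wpath W ((Γ.σ ^ a) h) b := by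
  unfold BrauerGraph.wpath
  rw [Finset.prod_range_add]
  refine congrArg _ (Finset.prod_congr rfl fun t _ => ?_)
  rw [add_comm a t, pow_add, Equiv.Perm.mul_apply]

private lemma bg_v_pow (h : Γ.H) (t : ℕ) : Γ.v ((Γ.σ ^ t) h) = Γ.v h :=
  ((Γ.v_eq_iff h _).mpr ⟨t, by rw [zpow_natCast]⟩).symm

end BrauerCoveringAux

/-- For a successor weighting `W : 𝒵_Δ → G` of a Brauer graph with values
in a finite abelian group `G`, the valency of a vertex `μ_d` of the covering graph
`Δ_W` (namely the number of half-edges `(j, a) ∈ Δ₁ × G` incident with it, i.e. lying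
in the class `d`) equals `ord(μ)·val(μ)`. -/
theorem covering_valency {G : Type} [CommGroup G] [Fintype G]
    (Γ : BrauerGraph) (W : Γ.H → G) (h₀ : Γ.H) (g : G) :
    Nat.card {p : Γ.H × G // Relation.EqvGen (Γ.covRel W) p (h₀, g)} =
      orderOf (Γ.omega W (Γ.v h₀)) * Γ.val (Γ.v h₀) := by
  classical
  open Function in
  set ω := Γ.omega W (Γ.v h₀) with hω
  set n := orderOf ω with hn
  set k := Function.minimalPeriod (⇑Γ.σ) h₀ with hk
  have hnpos : 0 < n := orderOf_pos ω
  have hmem : h₀ ∈ periodicPts ⇑Γ.σ :=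
    ⟨orderOf Γ.σ, orderOf_pos Γ.σ, by
      simp [IsPeriodicPt, IsFixedPt, pow_orderOf_eq_one]
      rw [Equiv.Perm.iterate_eq_pow, pow_orderOf_eq_one]; rfl⟩
  have hkpos : 0 < k := minimalPeriod_pos_of_mem_periodicPts hmem
  have hper : (Γ.σ ^ k) h₀ = h₀ := by
    have h : (⇑Γ.σ)^[k] h₀ = h₀ := isPeriodicPt_minimalPeriod (⇑Γ.σ) h₀
    rwa [Equiv.Perm.iterate_eq_pow] at h
  have hperq : ∀ q : ℕ, (Γ.σ ^ (k * q)) h₀ = h₀ := by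
    intro q
    induction q with
    | zero => simp
    | succ q ih => rw [Nat.mul_succ, pow_add, Equiv.Perm.mul_apply, hper, ih]
  -- every half-edge of the fibre of `Γ.v h₀` is `σ^t h₀` with `t < k`
  have hfib : ∀ h : Γ.H, Γ.v h = Γ.v h₀ → ∃ t : ℕ, t < k ∧ (Γ.σ ^ t) h₀ = h := by
    intro h hh
    obtain ⟨z, hz⟩ := (Γ.v_eq_iff h₀ h).mp hh.symm
    set N := orderOf Γ.σ with hN
    have hNpos : (0 : ℤ) < N := by exact_mod_cast orderOf_pos Γ.σ
    have h1 : Γ.σ ^ z = Γ.σ ^ ((z % N).toNat) := by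
      rw [← zpow_natCast, Int.toNat_of_nonneg (Int.emod_nonneg z hNpos.ne'),
        zpow_mod_orderOf]
    refine ⟨(z % N).toNat % k, Nat.mod_lt _ hkpos, ?_⟩
    have h2 : (⇑Γ.σ)^[(z % N).toNat % k] h₀ = (⇑Γ.σ)^[(z % N).toNat] h₀ :=
      iterate_mod_minimalPeriod_eq
    simp only [Equiv.Perm.iterate_eq_pow] at h2
    rw [h2, ← h1, hz]
  have hinj : ∀ t t' : ℕ, t < k → t' < k → (Γ.σ ^ t) h₀ = (Γ.σ ^ t') h₀ → t = t' := by
    intro t t' ht ht' he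
    refine iterate_injOn_Iio_minimalPeriod (Set.mem_Iio.mpr ht) (Set.mem_Iio.mpr ht') ?_
    simpa [Equiv.Perm.iterate_eq_pow] using he
  -- the product of `W` along one full cycle equals `ω`, and `val = k`
  have hωk : Γ.wpath W h₀ k = ω := by
    rw [hω]
    unfold BrauerGraph.wpath BrauerGraph.omega
    refine Finset.prod_bij (fun t _ => (Γ.σ ^ t) h₀) ?_ ?_ ?_ ?_
    · intro t ht
      simp [bg_v_pow]
    · intro t ht t' ht' he
      exact hinj t t' (Finset.mem_range.mp ht) (Finset.mem_range.mp ht') he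
    · intro h hh
      obtain ⟨t, ht, hth⟩ := hfib h (Finset.mem_filter.mp hh).2
      exact ⟨t, Finset.mem_range.mpr ht, hth⟩
    · intro t ht; rfl
  have hval : Γ.val (Γ.v h₀) = k := by
    unfold BrauerGraph.val
    rw [Nat.card_eq_fintype_card, Fintype.card_subtype]
    rw [← Finset.card_range k]
    refine (Finset.card_bij (fun t _ => (Γ.σ ^ t) h₀) ?_ ?_ ?_).symm
    · intro t ht
      simp [bg_v_pow]
    · intro t ht t' ht' he
      exact hinj t t' (Finset.mem_range.mp ht) (Finset.mem_range.mp ht') he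
    · intro h hh
      obtain ⟨t, ht, hth⟩ := hfib h (Finset.mem_filter.mp hh).2
      exact ⟨t, Finset.mem_range.mpr ht, hth⟩
  have hwqk : ∀ q : ℕ, Γ.wpath W h₀ (k * q) = ω ^ q := by
    intro q
    induction q with
    | zero => simp [BrauerGraph.wpath]
    | succ q ih =>
      rw [Nat.mul_succ, bg_wpath_add, ih, hperq, hωk, pow_succ]
  -- reduction of integer exponents of ω
  have hzred : ∀ z : ℤ, ∃ u : ℕ, u < n ∧ ω ^ z = (ω : G) ^ u := by
    intro z
    have hnz : (0 : ℤ) < (n : ℤ) := by exact_mod_cast hnpos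
    refine ⟨(z % n).toNat, ?_, ?_⟩
    · have := Int.emod_lt_of_pos z hnz
      have h0 := Int.emod_nonneg z hnz.ne'
      omega
    · rw [← zpow_natCast, Int.toNat_of_nonneg (Int.emod_nonneg z hnz.ne'), hn,
        zpow_mod_orderOf]
  -- the candidate description of the equivalence class
  set Im : Set (Γ.H × G) :=
    {p | ∃ (t : ℕ) (s : ℤ), p.1 = (Γ.σ ^ t) h₀ ∧ p.2 = g * Γ.wpath W h₀ t * ω ^ s}
    with hIm
  have hstep : ∀ a b, Γ.covRel W a b → (a ∈ Im ↔ b ∈ Im) := by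
    intro a b hab
    constructor
    · rintro ⟨t, s, h1, h2⟩
      rcases hab with ⟨hb1, hb2⟩ | ⟨hb1, hb2⟩
      · refine ⟨t + 1, s, ?_, ?_⟩
        · rw [hb1, h1, pow_succ', Equiv.Perm.mul_apply]
        · rw [hb2, h2, h1, bg_wpath_succ]
          simp [mul_assoc, mul_comm, mul_left_comm]
      · refine ⟨t, s + 1, ?_, ?_⟩
        · rw [hb1, h1]
        · rw [hb2, h2, h1, bg_v_pow, ← hω, zpow_add_one]
          simp [mul_assoc, mul_comm, mul_left_comm]
    · rintro ⟨t, s, h1, h2⟩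
      -- renormalize so that the exponent is positive
      obtain ⟨t', s', ht'pos, h1, h2⟩ :
          ∃ (t' : ℕ) (s' : ℤ), 0 < t' ∧ b.1 = (Γ.σ ^ t') h₀ ∧
            b.2 = g * Γ.wpath W h₀ t' * ω ^ s' := by
        rcases Nat.eq_zero_or_pos t with rfl | ht
        · refine ⟨k, s - 1, hkpos, ?_, ?_⟩
          · rw [h1, pow_zero, Equiv.Perm.one_apply, hper]
          · rw [h2, hωk]
            simp only [BrauerGraph.wpath, Finset.range_zero, Finset.prod_empty, mul_one]
            have e : (1 : ℤ) + (s - 1) = s := by ring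
            rw [mul_assoc, ← zpow_one_add, e]
        · exact ⟨t, s, ht, h1, h2⟩
      rcases hab with ⟨hb1, hb2⟩ | ⟨hb1, hb2⟩
      · obtain ⟨t'', rfl⟩ : ∃ t'', t' = t'' + 1 := ⟨t' - 1, by omega⟩
        have ha1 : a.1 = (Γ.σ ^ t'') h₀ := by
          apply Γ.σ.injective
          rw [← hb1, h1, pow_succ', Equiv.Perm.mul_apply]
        refine ⟨t'', s', ha1, ?_⟩
        have : a.2 * W a.1 = g * Γ.wpath W h₀ t'' * ω ^ s' * W a.1 := by
          rw [← hb2, h2, bg_wpath_succ, ha1]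
          simp [mul_assoc, mul_comm, mul_left_comm]
        exact mul_right_cancel this
      · have hva : Γ.v a.1 = Γ.v h₀ := by rw [← hb1, h1, bg_v_pow]
        have hωa : Γ.omega W (Γ.v a.1) = ω := by rw [hva, hω]
        refine ⟨t', s' - 1, by rw [← hb1, h1], ?_⟩
        have key : a.2 * ω = g * Γ.wpath W h₀ t' * ω ^ (s' - 1) * ω := by
          rw [← hωa, ← hb2, h2, hωa, mul_assoc (g * Γ.wpath W h₀ t'), ← zpow_add_one,
            sub_add_cancel]
        exact mul_right_cancel key
  have hclosed : ∀ p q, Relation.EqvGen (Γ.covRel W) p q → (p ∈ Im ↔ q ∈ Im) := by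
    intro p q hpq
    induction hpq with
    | rel a b hab => exact hstep a b hab
    | refl a => exact Iff.rfl
    | symm a b _ ih => exact ih.symm
    | trans a b c _ _ ih1 ih2 => exact ih1.trans ih2
  have hbase : ((h₀, g) : Γ.H × G) ∈ Im := by
    refine ⟨0, 0, by simp, by simp [BrauerGraph.wpath]⟩
  -- every element of Im is in the equivalence class
  have hchain1 : ∀ t : ℕ, Relation.EqvGen (Γ.covRel W) (h₀, g)
      ((Γ.σ ^ t) h₀, g * Γ.wpath W h₀ t) := by
    intro t
    induction t with
    | zero =>
      have he : (((Γ.σ ^ 0) h₀ : Γ.H), g * Γ.wpath W h₀ 0) = (h₀, g) := by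
        simp [BrauerGraph.wpath]
      rw [he]
      exact Relation.EqvGen.refl _
    | succ t ih =>
      refine Relation.EqvGen.trans _ _ _ ih (Relation.EqvGen.rel _ _ (Or.inl ⟨?_, ?_⟩))
      · rw [pow_succ', Equiv.Perm.mul_apply]
      · rw [bg_wpath_succ, mul_assoc]
  have hchain2 : ∀ (j : Γ.H), Γ.v j = Γ.v h₀ → ∀ (a : G) (u : ℕ),
      Relation.EqvGen (Γ.covRel W) (j, a) (j, a * ω ^ u) := by
    intro j hj a u
    induction u with
    | zero =>
      have he : ((j, a * ω ^ 0) : Γ.H × G) = (j, a) := by simp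
      rw [he]; exact Relation.EqvGen.refl _
    | succ u ih =>
      refine Relation.EqvGen.trans _ _ _ ih (Relation.EqvGen.rel _ _ (Or.inr ⟨rfl, ?_⟩))
      show a * ω ^ (u + 1) = a * ω ^ u * Γ.omega W (Γ.v j)
      rw [hj, ← hω, pow_succ, mul_assoc]
  have hIm_sub : ∀ p ∈ Im, Relation.EqvGen (Γ.covRel W) p (h₀, g) := by
    rintro ⟨j, a⟩ ⟨t, s, h1, h2⟩
    obtain ⟨u, hu, hzu⟩ := hzred s
    have he : ((j, a) : Γ.H × G) = ((Γ.σ ^ t) h₀, (g * Γ.wpath W h₀ t) * ω ^ u) := by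
      rw [Prod.ext_iff]
      exact ⟨h1, by rw [h2, hzu]⟩
    rw [he]
    refine Relation.EqvGen.symm _ _ ?_
    exact Relation.EqvGen.trans _ _ _ (hchain1 t)
      (hchain2 _ (bg_v_pow Γ h₀ t) (g * Γ.wpath W h₀ t) u)
  have hsetEq : ∀ p : Γ.H × G, Relation.EqvGen (Γ.covRel W) p (h₀, g) ↔ p ∈ Im :=
    fun p => ⟨fun h => (hclosed p _ h).mpr hbase, fun h => hIm_sub p h⟩
  rw [Nat.card_congr (Equiv.subtypeEquivRight hsetEq)]
  -- count Im via a bijection with Fin k × Fin n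
  have hcard : Nat.card {p : Γ.H × G // p ∈ Im} = Nat.card (Fin k × Fin n) := by
    refine (Nat.card_eq_of_bijective
      (fun ts : Fin k × Fin n =>
        (⟨((Γ.σ ^ (ts.1 : ℕ)) h₀, g * Γ.wpath W h₀ (ts.1 : ℕ) * ω ^ (ts.2 : ℕ)),
          ⟨ts.1, (ts.2 : ℕ), rfl, by rw [zpow_natCast]⟩⟩ : {p : Γ.H × G // p ∈ Im}))
      ⟨?_, ?_⟩).symm
    · rintro ⟨t, s⟩ ⟨t', s'⟩ he
      rw [Subtype.ext_iff, Prod.ext_iff] at he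
      obtain ⟨he1, he2⟩ := he
      dsimp only at he1 he2
      have ht : (t : ℕ) = t' := hinj _ _ t.2 t'.2 he1
      have hs : (s : ℕ) = s' := by
        rw [ht] at he2
        have := mul_left_cancel he2
        exact pow_injOn_Iio_orderOf (Set.mem_Iio.mpr s.2) (Set.mem_Iio.mpr s'.2) this
      exact Prod.ext (Fin.ext ht) (Fin.ext hs)
    · rintro ⟨⟨j, a⟩, t, s, h1, h2⟩
      dsimp only at h1 h2
      have hrj : (Γ.σ ^ (t % k)) h₀ = (Γ.σ ^ t) h₀ := by
        have h := iterate_mod_minimalPeriod_eq (f := ⇑Γ.σ) (x := h₀) (n := t)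
        rwa [Equiv.Perm.iterate_eq_pow, Equiv.Perm.iterate_eq_pow] at h
      have hwt : Γ.wpath W h₀ t = ω ^ (t / k) * Γ.wpath W h₀ (t % k) := by
        conv_lhs => rw [← Nat.div_add_mod t k]
        rw [bg_wpath_add, hwqk, hperq]
      obtain ⟨u, hu, hzu⟩ := hzred ((t / k : ℕ) + s)
      refine ⟨(⟨t % k, Nat.mod_lt _ hkpos⟩, ⟨u, hu⟩), ?_⟩
      rw [Subtype.ext_iff, Prod.ext_iff]
      constructor
      · show (Γ.σ ^ (t % k)) h₀ = j
        exact hrj.trans h1.symm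
      · show g * Γ.wpath W h₀ (t % k) * ω ^ u = a
        rw [h2, hwt, ← hzu, zpow_add, zpow_natCast]
        simp [mul_assoc, mul_comm, mul_left_comm]
  rw [hcard, Nat.card_eq_fintype_card, Fintype.card_prod, Fintype.card_fin,
    Fintype.card_fin, hval, hn]
  exact Nat.mul_comm _ _
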